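/- Let t = -2 + x₁² + x₂² - x₁x₂x₃ + x₃² over the ring ℂ[x₁,x₂,x₃][ (t²-4)^{-1} ], and define the 2-form η = [(t-2)x₁ dx₂∧dx₃ + x₃(x₃²-4) dx₁∧dx₂ + (2x₁x₃ + 2x₂ - t·x₂ - x₂x₃²) dx₁∧dx₃] / (2(t²-4)). Then η ∧ dt = dx₁∧dx₂∧dx₃. -/

import Mathlib

open MvPolynomial

/-- The boundary trace polynomial of the one-holed torus. -/
noncomputable def t : MvPolynomial (Fin 3) ℂ :=
  -2 + X 0 ^ 2 + X 1 ^ 2 - X 0 * X 1 * X 2 + X 2 ^ 2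

/-- Embedding of `ℂ[x₁,x₂,x₃]` into its fraction field (which contains the
localization at `t² - 4`). -/
noncomputable def φ : MvPolynomial (Fin 3) ℂ →+* FractionRing (MvPolynomial (Fin 3) ℂ) :=
  algebraMap _ _

/-- `η ∧ dt = dx₁∧dx₂∧dx₃`, where
`η = [(t-2)x₁ dx₂₃ + x₃(x₃²-4) dx₁₂ + (2x₁x₃+2x₂-tx₂-x₂x₃²) dx₁₃] / (2(t²-4))`.
Since `(f dx₂₃ + g dx₁₃ + h dx₁₂) ∧ dt = (f ∂₁t - g ∂₂t + h ∂₃t) dx₁₂₃`, the claim is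
that this coefficient equals `1` in the localization at `t² - 4`. -/
theorem stmt_8 :
    ((φ t - 2) * φ (X 0) / (2 * (φ t ^ 2 - 4))) * φ (pderiv 0 t)
      - ((2 * φ (X 0) * φ (X 2) + 2 * φ (X 1) - φ t * φ (X 1) - φ (X 1) * φ (X 2) ^ 2) /
          (2 * (φ t ^ 2 - 4))) * φ (pderiv 1 t)
      + (φ (X 2) * (φ (X 2) ^ 2 - 4) / (2 * (φ t ^ 2 - 4))) * φ (pderiv 2 t) = 1 := by
  have htne : (t : MvPolynomial (Fin 3) ℂ) ^ 2 - 4 ≠ 0 := by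
    intro h
    have := congrArg (eval fun _ => (1 : ℂ)) h
    simp [t] at this
    norm_num at this
  have hφ : Function.Injective φ := IsFractionRing.injective _ _
  have hne : φ t ^ 2 - 4 ≠ 0 := by
    intro h
    have h4 : φ (t ^ 2 - 4) = 0 := by rw [map_sub, map_pow, map_ofNat]; exact h
    exact htne (hφ (h4.trans (map_zero φ).symm))
  have p2 : ∀ i : Fin 3, pderiv i (2 : MvPolynomial (Fin 3) ℂ) = 0 := fun i => by
    rw [show (2 : MvPolynomial (Fin 3) ℂ) = C 2 from (map_ofNat C 2).symm, pderiv_C]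
  set a := φ (X 0 : MvPolynomial (Fin 3) ℂ) with ha
  set b := φ (X 1 : MvPolynomial (Fin 3) ℂ) with hb
  set c := φ (X 2 : MvPolynomial (Fin 3) ℂ) with hc
  have hst : φ t = -2 + a ^ 2 + b ^ 2 - a * b * c + c ^ 2 := by
    rw [ha, hb, hc]; simp [t, map_ofNat]
  have h0 : φ (pderiv 0 t) = 2 * a - b * c := by
    have : pderiv 0 t = 2 * X 0 - X 1 * X 2 := by
      simp [t, pderiv_X, p2]; ring
    rw [this]; simp [ha, hb, hc, map_ofNat]
  have h1 : φ (pderiv 1 t) = 2 * b - a * c := by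
    have : pderiv 1 t = 2 * X 1 - X 0 * X 2 := by
      simp [t, pderiv_X, p2]; ring
    rw [this]; simp [ha, hb, hc, map_ofNat]
  have h2 : φ (pderiv 2 t) = 2 * c - a * b := by
    have : pderiv 2 t = 2 * X 2 - X 0 * X 1 := by
      simp [t, pderiv_X, p2]; ring
    rw [this]; simp [ha, hb, hc, map_ofNat]
  have hd : (2 : FractionRing (MvPolynomial (Fin 3) ℂ)) * (φ t ^ 2 - 4) ≠ 0 :=
    mul_ne_zero two_ne_zero hne
  rw [h0, h1, h2, div_mul_eq_mul_div, div_mul_eq_mul_div, div_mul_eq_mul_div,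
    div_sub_div_same, ← add_div, div_eq_one_iff_eq hd, hst]
  ring
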